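/- Sandwiching identity: Let F be a d_A × d_A complex matrix and r, l ∈ ℂ^{d_A} satisfy the moment-matching condition l† F^k r = 1 for every integer k ≥ 0. Let A, K, B_1, …, B_J be N × N complex matrices, and define on ℂ^{d_A} ⊗ ℂ^N the dilated operators V_0 := I_A ⊗ A + (F − I_A) ⊗ K and V_j := I_A ⊗ B_j for 1 ≤ j ≤ J, and set B_0 := A. Then for every k ≥ 1 and every word α_1, …, α_k ∈ {0, 1, …, J}: (l† ⊗ I_N) · V_{α_k} ⋯ V_{α_1} · (r ⊗ I_N) = B_{α_k} ⋯ B_{α_1}. -/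

import Mathlib

open Matrix Kronecker

/-- The dilated operators: `V_0 = I_A ⊗ A + (F − I_A) ⊗ K` and `V_j = I_A ⊗ B_j`. -/
noncomputable def dilV {dA N J : ℕ} (F : Matrix (Fin dA) (Fin dA) ℂ)
    (A K : Matrix (Fin N) (Fin N) ℂ) (B : Fin J → Matrix (Fin N) (Fin N) ℂ) :
    Fin (J + 1) → Matrix (Fin dA × Fin N) (Fin dA × Fin N) ℂ :=
  Fin.cases ((1 : Matrix (Fin dA) (Fin dA) ℂ) ⊗ₖ A +
      (F - (1 : Matrix (Fin dA) (Fin dA) ℂ)) ⊗ₖ K)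
    (fun j => (1 : Matrix (Fin dA) (Fin dA) ℂ) ⊗ₖ B j)

/-- The original SDE coefficients, with `B_0 := A`. -/
noncomputable def sdeB {N J : ℕ} (A : Matrix (Fin N) (Fin N) ℂ)
    (B : Fin J → Matrix (Fin N) (Fin N) ℂ) : Fin (J + 1) → Matrix (Fin N) (Fin N) ℂ :=
  Fin.cases A B

/-- The readout map `l† ⊗ I_N : ℂ^{d_A} ⊗ ℂ^N → ℂ^N`, as a matrix. -/
noncomputable def readL {dA N : ℕ} (l : Fin dA → ℂ) :
    Matrix (Fin N) (Fin dA × Fin N) ℂ :=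
  Matrix.of fun i p => star (l p.1) * (if p.2 = i then 1 else 0)

/-- The embedding `r ⊗ I_N : ℂ^N → ℂ^{d_A} ⊗ ℂ^N`, as a matrix. -/
noncomputable def embedR {dA N : ℕ} (r : Fin dA → ℂ) :
    Matrix (Fin dA × Fin N) (Fin N) ℂ :=
  Matrix.of fun p i => r p.1 * (if p.2 = i then 1 else 0)

lemma readL_mul_one_kron {dA N : ℕ} (l : Fin dA → ℂ) (M : Matrix (Fin N) (Fin N) ℂ) :
    readL (N := N) l * ((1 : Matrix (Fin dA) (Fin dA) ℂ) ⊗ₖ M) = M * (readL l (N := N)) := by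
  ext i p
  simp [readL, Matrix.mul_apply, Fintype.sum_prod_type, kroneckerMap_apply,
    Matrix.one_apply, mul_comm, mul_ite, ite_mul, Finset.sum_ite_eq, Finset.sum_ite_eq']

lemma kron_one_mul_embedR {dA N : ℕ} (r : Fin dA → ℂ) (G : Matrix (Fin dA) (Fin dA) ℂ) :
    (G ⊗ₖ (1 : Matrix (Fin N) (Fin N) ℂ)) * embedR (N := N) r = embedR (G *ᵥ r) := by
  ext p i
  simp [embedR, Matrix.mul_apply, Fintype.sum_prod_type, kroneckerMap_apply,
    Matrix.one_apply, Matrix.mulVec, dotProduct, mul_ite, ite_mul,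
    Finset.sum_ite_eq, Finset.sum_ite_eq']

lemma readL_mul_embedR {dA N : ℕ} (l r : Fin dA → ℂ) :
    readL (N := N) l * embedR (N := N) r = (star l ⬝ᵥ r) • (1 : Matrix (Fin N) (Fin N) ℂ) := by
  ext i j
  simp [readL, embedR, Matrix.mul_apply, Fintype.sum_prod_type, dotProduct,
    Matrix.one_apply, mul_ite, ite_mul, Finset.sum_ite_eq, Finset.sum_ite_eq',
    Matrix.smul_apply, smul_eq_mul, mul_comm]

/-- `(F-1)^m` is annihilated by the moment-matching sandwich unless `m = 0`. -/
lemma moment_vanish {dA : ℕ} (F : Matrix (Fin dA) (Fin dA) ℂ) (r l : Fin dA → ℂ)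
    (hmm : ∀ k : ℕ, star l ⬝ᵥ (F ^ k *ᵥ r) = 1) (m : ℕ) :
    star l ⬝ᵥ ((F - 1) ^ m *ᵥ r) = if m = 0 then 1 else 0 := by
  have key : ∀ m j : ℕ, star l ⬝ᵥ (((F - 1) ^ m * F ^ j) *ᵥ r)
      = if m = 0 then 1 else 0 := by
    intro m
    induction m with
    | zero => intro j; simpa using hmm j
    | succ m ih =>
      intro j
      have h1 : (F - 1) ^ (m + 1) * F ^ j
          = (F - 1) ^ m * F ^ (j + 1) - (F - 1) ^ m * F ^ j := by
        rw [pow_succ, pow_succ']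
        noncomm_ring
      rw [h1, Matrix.sub_mulVec, dotProduct_sub, ih, ih]
      simp
  simpa using key m 0

/-- Pull the `N`-factor of a Kronecker product out through the readout map. -/
lemma sandwich_kron {dA N : ℕ} (l r : Fin dA → ℂ) (G : Matrix (Fin dA) (Fin dA) ℂ)
    (M : Matrix (Fin N) (Fin N) ℂ) (P : Matrix (Fin dA × Fin N) (Fin dA × Fin N) ℂ) :
    readL (N := N) l * ((G ⊗ₖ M) * P) * embedR (N := N) r
      = M * (readL (N := N) l * ((G ⊗ₖ (1 : Matrix (Fin N) (Fin N) ℂ)) * P) * embedR (N := N) r) := by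
  have h : G ⊗ₖ M = ((1 : Matrix (Fin dA) (Fin dA) ℂ) ⊗ₖ M)
      * (G ⊗ₖ (1 : Matrix (Fin N) (Fin N) ℂ)) := by
    rw [← Matrix.mul_kronecker_mul, one_mul, mul_one]
  rw [h]
  simp only [Matrix.mul_assoc]
  rw [← Matrix.mul_assoc (readL l), readL_mul_one_kron]
  simp only [Matrix.mul_assoc]

lemma dilation_key {dA N J : ℕ} (F : Matrix (Fin dA) (Fin dA) ℂ) (r l : Fin dA → ℂ)
    (hmm : ∀ k : ℕ, star l ⬝ᵥ (F ^ k *ᵥ r) = 1)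
    (A K : Matrix (Fin N) (Fin N) ℂ) (B : Fin J → Matrix (Fin N) (Fin N) ℂ)
    (L : List (Fin (J + 1))) (m : ℕ) :
    readL (N := N) l * ((((F - 1) ^ m) ⊗ₖ (1 : Matrix (Fin N) (Fin N) ℂ))
        * (L.map (dilV F A K B)).prod) * embedR (N := N) r
      = (if m = 0 then (1 : ℂ) else 0) • (L.map (sdeB A B)).prod := by
  induction L generalizing m with
  | nil =>
    simp only [List.map_nil, List.prod_nil, mul_one]
    rw [Matrix.mul_assoc, kron_one_mul_embedR, readL_mul_embedR, moment_vanish F r l hmm]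
  | cons h tl ih =>
    induction h using Fin.cases with
    | zero =>
      simp only [List.map_cons, List.prod_cons, dilV, sdeB, Fin.cases_zero]
      have h0 : (((F - 1) ^ m) ⊗ₖ (1 : Matrix (Fin N) (Fin N) ℂ))
          * (((1 : Matrix (Fin dA) (Fin dA) ℂ) ⊗ₖ A
              + (F - (1 : Matrix (Fin dA) (Fin dA) ℂ)) ⊗ₖ K)
            * (tl.map (dilV F A K B)).prod)
          = (((F - 1) ^ m) ⊗ₖ A) * (tl.map (dilV F A K B)).prod
            + (((F - 1) ^ (m + 1)) ⊗ₖ K) * (tl.map (dilV F A K B)).prod := by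
        rw [← Matrix.mul_assoc, Matrix.mul_add, Matrix.add_mul,
          ← Matrix.mul_kronecker_mul, ← Matrix.mul_kronecker_mul, ← pow_succ]
        simp only [mul_one, one_mul]
      rw [h0, Matrix.mul_add, Matrix.add_mul, sandwich_kron l r ((F - 1) ^ m) A,
        sandwich_kron l r ((F - 1) ^ (m + 1)) K, ih m, ih (m + 1)]
      simp [mul_smul_comm, smul_add]
    | succ j =>
      simp only [List.map_cons, List.prod_cons, dilV, sdeB, Fin.cases_succ]
      have h0 : (((F - 1) ^ m) ⊗ₖ (1 : Matrix (Fin N) (Fin N) ℂ))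
          * (((1 : Matrix (Fin dA) (Fin dA) ℂ) ⊗ₖ B j)
            * (tl.map (dilV F A K B)).prod)
          = (((F - 1) ^ m) ⊗ₖ B j) * (tl.map (dilV F A K B)).prod := by
        rw [← Matrix.mul_assoc, ← Matrix.mul_kronecker_mul]
        simp only [mul_one, one_mul]
      rw [h0, sandwich_kron, ih m]
      simp [mul_smul_comm]

/-- **Sandwiching identity.** If `(F, r, l)` is a moment-matching triple,
then for every word `α` in the alphabet `{0, 1, …, J}` the sandwiched product of dilated
operators equals the corresponding product of original coefficients:
`(l† ⊗ I_N) V_{α_k} ⋯ V_{α_1} (r ⊗ I_N) = B_{α_k} ⋯ B_{α_1}`. -/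
theorem dilation_sandwich (dA N J : ℕ) (hdA : 1 ≤ dA) (hN : 1 ≤ N)
    (F : Matrix (Fin dA) (Fin dA) ℂ) (r l : Fin dA → ℂ)
    (hmm : ∀ k : ℕ, star l ⬝ᵥ (F ^ k *ᵥ r) = 1)
    (A K : Matrix (Fin N) (Fin N) ℂ) (B : Fin J → Matrix (Fin N) (Fin N) ℂ)
    (k : ℕ) (hk : 1 ≤ k) (α : Fin k → Fin (J + 1)) :
    readL (N := N) l * (List.ofFn fun i => dilV F A K B (α i)).prod * embedR (N := N) r =
      (List.ofFn fun i => sdeB A B (α i)).prod := by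
  have h := dilation_key F r l hmm A K B (List.ofFn α) 0
  simp only [pow_zero, Matrix.one_kronecker_one, one_mul, if_pos rfl, one_smul,
    List.map_ofFn] at h
  simpa [Function.comp_def] using h
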